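/- arXiv:1502.01443 — 2 statements merged into one kernel-verified Lean document; each statement's English description precedes it below -/
import Mathlib

section
/- Let 𝕋 be the k-regular tree and let 𝒫 be the bi-infinite path with vertex set ℤ. For φ : V(𝕋) → ℂ, extend the spherical mean M_φ(x,r) to all r ∈ ℤ as an even function of r. Then Δ_𝕋 M_φ(x,r) = (Δ_𝒫 + (2−k)∂_r) M_φ(x,r) for all x ∈ V(𝕋) and r ∈ ℤ≥0, where Δ_𝒫 v(r) = 2v(r) − v(r+1) − v(r−1) and ∂_r v(r) = v(r+1) − v(r). -/
open scoped BigOperators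

/-- Size of the sphere of radius `r` in the `k`-regular tree. -/
def sphereSize (k r : ℕ) : ℕ := if r = 0 then 1 else k * (k - 1) ^ (r - 1)

/-- Spherical mean `M_φ(x,r) = (1/S(r)) Σ_{d(x,z)=r} φ(z)` in the `k`-regular tree. -/
noncomputable def sphericalMean {V : Type*} (G : SimpleGraph V) (k : ℕ) (φ : V → ℂ)
    (x : V) (r : ℕ) : ℂ :=
  ((sphereSize k r : ℂ))⁻¹ * ∑' z : {z : V | G.dist x z = r}, φ z.1

/-- The spherical mean extended to all `r ∈ ℤ` as an even function of `r`. -/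
noncomputable def sphericalMeanZ {V : Type*} (G : SimpleGraph V) (k : ℕ) (φ : V → ℂ)
    (x : V) (r : ℤ) : ℂ :=
  sphericalMean G k φ x r.natAbs

open SimpleGraph Finset

section Aux

variable {V : Type*} {G : SimpleGraph V}

lemma aux_dist_lt {x z u : V} (p : G.Walk x z) (hp : p.length = G.dist x z)
    (hu : u ∈ p.support) (hne : u ≠ x) : G.dist u z < G.dist x z := by
  classical
  have h1 := p.length_takeUntil_le hu
  have h2 : (p.takeUntil u hu).length + (p.dropUntil u hu).length = p.length := by
    have := congrArg Walk.length (p.take_spec hu)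
    rwa [Walk.length_append] at this
  have h3 : G.dist u z ≤ (p.dropUntil u hu).length := dist_le _
  have h4 : (p.takeUntil u hu).length ≠ 0 := by
    intro h0
    exact hne (Walk.eq_of_length_eq_zero h0).symm
  omega

lemma aux_dist_ne (hacyc : G.IsAcyclic) {x y z : V} (hadj : G.Adj x y)
    (hrx : G.Reachable x z) : G.dist x z ≠ G.dist y z := by
  classical
  intro heq
  obtain ⟨p, hp, hpl⟩ := hrx.exists_path_of_dist
  have hry : G.Reachable y z := (hadj.symm.reachable).trans hrx
  obtain ⟨q, hq, hql⟩ := hry.exists_path_of_dist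
  have hyp : y ∉ p.support := by
    intro hmem
    have := aux_dist_lt p hpl hmem (fun h => G.irrefl (h ▸ hadj))
    omega
  have hxq : x ∉ q.support := by
    intro hmem
    have := aux_dist_lt q hql hmem (fun h => G.irrefl (h ▸ hadj.symm))
    omega
  have hcons : (Walk.cons hadj q).IsPath := hq.cons hxq
  have := hacyc.path_unique ⟨p, hp⟩ ⟨Walk.cons hadj q, hcons⟩
  have hl := congrArg (fun (P : G.Path x z) => P.1.length) this
  simp only [Walk.length_cons] at hl
  omega

lemma aux_dichotomy (hacyc : G.IsAcyclic) (hconn : G.Connected) {x y z : V} (hadj : G.Adj x y) :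
    G.dist y z = G.dist x z + 1 ∨ G.dist x z = G.dist y z + 1 := by
  have h1 : G.dist y z ≤ G.dist y x + G.dist x z := hconn.dist_triangle
  have h2 : G.dist x z ≤ G.dist x y + G.dist y z := hconn.dist_triangle
  rw [dist_eq_one_iff_adj.mpr hadj.symm] at h1
  rw [dist_eq_one_iff_adj.mpr hadj] at h2
  have h3 := aux_dist_ne hacyc hadj (hconn x z)
  omega

lemma aux_exists_down (hconn : G.Connected) {x z : V} {n : ℕ} (hd : G.dist x z = n + 1) :
    ∃ y, G.Adj x y ∧ G.dist y z = n := by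
  obtain ⟨p, hp, hpl⟩ := hconn.exists_path_of_dist x z
  have hnil : ¬ p.Nil := by
    rw [Walk.nil_iff_length_eq]; omega
  refine ⟨p.getVert 1, Walk.adj_snd hnil, ?_⟩
  have htail : G.dist (p.getVert 1) z ≤ p.tail.length := dist_le _
  have hlen : p.tail.length + 1 = p.length := p.length_tail_add_one hnil
  have h2 : G.dist x z ≤ G.dist x (p.getVert 1) + G.dist (p.getVert 1) z := hconn.dist_triangle
  rw [dist_eq_one_iff_adj.mpr (Walk.adj_snd hnil)] at h2
  omega

lemma aux_unique_down (hacyc : G.IsAcyclic) (hconn : G.Connected) {x z y₁ y₂ : V} {n : ℕ}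
    (hd : G.dist x z = n + 1) (h1 : G.Adj x y₁) (h2 : G.Adj x y₂)
    (hd1 : G.dist y₁ z = n) (hd2 : G.dist y₂ z = n) : y₁ = y₂ := by
  classical
  obtain ⟨q₁, hq₁, hql₁⟩ := hconn.exists_path_of_dist y₁ z
  obtain ⟨q₂, hq₂, hql₂⟩ := hconn.exists_path_of_dist y₂ z
  have hx1 : x ∉ q₁.support := by
    intro hmem
    have := aux_dist_lt q₁ hql₁ hmem (fun h => G.irrefl (h ▸ h1))
    omega
  have hx2 : x ∉ q₂.support := by
    intro hmem
    have := aux_dist_lt q₂ hql₂ hmem (fun h => G.irrefl (h ▸ h2))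
    omega
  have hc1 : (Walk.cons h1 q₁).IsPath := hq₁.cons hx1
  have hc2 : (Walk.cons h2 q₂).IsPath := hq₂.cons hx2
  have := hacyc.path_unique ⟨Walk.cons h1 q₁, hc1⟩ ⟨Walk.cons h2 q₂, hc2⟩
  have hv := congrArg (fun (P : G.Path x z) => P.1.getVert 1) this
  simpa using hv

variable [∀ v, Fintype (G.neighborSet v)]

lemma aux_sphere_finite (hconn : G.Connected) (x : V) :
    ∀ n : ℕ, {z : V | G.dist x z = n}.Finite := by
  intro n
  induction n with
  | zero =>
    apply Set.Finite.subset (Set.finite_singleton x)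
    intro z hz
    simp only [Set.mem_setOf_eq] at hz
    exact Set.mem_singleton_iff.mpr ((hconn.dist_eq_zero_iff).mp hz).symm
  | succ n ih =>
    apply Set.Finite.subset (Set.Finite.biUnion ih (fun y _ => (G.neighborSet y).toFinite))
    intro z hz
    simp only [Set.mem_setOf_eq] at hz
    have hd : G.dist z x = n + 1 := by rwa [dist_comm]
    obtain ⟨y, hadj, hy⟩ := aux_exists_down hconn hd
    exact Set.mem_biUnion (show G.dist x y = n by rwa [dist_comm]) hadj.symm

/-- The sphere of radius `n` about `x`, as a `Finset`. -/
noncomputable def sphF (G : SimpleGraph V) [∀ v, Fintype (G.neighborSet v)]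
    (hconn : G.Connected) (x : V) (n : ℕ) : Finset V :=
  (aux_sphere_finite hconn x n).toFinset

lemma mem_sphF (hconn : G.Connected) {x z : V} {n : ℕ} :
    z ∈ sphF G hconn x n ↔ G.dist x z = n := by
  simp [sphF, Set.Finite.mem_toFinset]

lemma aux_tsum_finite {W : Type*} (S : Set W) (hfin : S.Finite) (φ : W → ℂ) :
    ∑' z : S, φ z.1 = ∑ z ∈ hfin.toFinset, φ z := by
  haveI := hfin.fintype
  rw [tsum_fintype]
  exact (Finset.sum_subtype hfin.toFinset (fun _ => hfin.mem_toFinset) φ).symm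

lemma sphericalMean_eq (hconn : G.Connected) (k : ℕ) (φ : V → ℂ) (x : V) (n : ℕ) :
    sphericalMean G k φ x n
      = ((sphereSize k n : ℂ))⁻¹ * ∑ z ∈ sphF G hconn x n, φ z := by
  rw [sphericalMean, aux_tsum_finite _ (aux_sphere_finite hconn x n)]
  rfl

lemma aux_card_down (hacyc : G.IsAcyclic) (hconn : G.Connected) {x z : V} {m : ℕ}
    (hd : G.dist x z = m + 1) :
    ((G.neighborFinset x).filter (fun y => G.dist y z = m)).card = 1 := by
  obtain ⟨y₀, hadj, hy₀⟩ := aux_exists_down hconn hd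
  rw [Finset.card_eq_one]
  refine ⟨y₀, ?_⟩
  ext y
  simp only [Finset.mem_filter, mem_neighborFinset, Finset.mem_singleton]
  constructor
  · rintro ⟨ha, hdy⟩
    exact aux_unique_down hacyc hconn hd ha hadj hdy hy₀
  · rintro rfl
    exact ⟨hadj, hy₀⟩

lemma aux_card_up {k : ℕ} (hacyc : G.IsAcyclic) (hconn : G.Connected)
    (hreg : G.IsRegularOfDegree k) {x z : V} {m : ℕ} (hd : G.dist x z = m + 1) :
    ((G.neighborFinset x).filter (fun y => G.dist y z = m + 1 + 1)).card = k - 1 := by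
  classical
  have key : (G.neighborFinset x).filter (fun y => G.dist y z = m + 1 + 1)
      = (G.neighborFinset x).filter (fun y => ¬ (G.dist y z = m)) := by
    apply Finset.filter_congr
    intro y hy
    rw [mem_neighborFinset] at hy
    rcases aux_dichotomy hacyc hconn hy (z := z) with h | h <;>
      constructor <;> intro h' <;> omega
  have h2 := Finset.card_filter_add_card_filter_not
      (s := G.neighborFinset x) (p := fun y => G.dist y z = m)
  have h3 := aux_card_down hacyc hconn hd
  have h4 : (G.neighborFinset x).card = k := by
    rw [card_neighborFinset_eq_degree]; exact hreg x
  rw [key]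
  omega

lemma aux_card_center {k : ℕ} (hreg : G.IsRegularOfDegree k) (x : V) :
    ((G.neighborFinset x).filter (fun y => G.dist y x = 1)).card = k := by
  have : (G.neighborFinset x).filter (fun y => G.dist y x = 1) = G.neighborFinset x := by
    apply Finset.filter_true_of_mem
    intro y hy
    rw [mem_neighborFinset] at hy
    exact dist_eq_one_iff_adj.mpr hy.symm
  rw [this, card_neighborFinset_eq_degree]
  exact hreg x

lemma aux_sum_zero (hconn : G.Connected) (φ : V → ℂ) (x : V) :
    ∑ y ∈ G.neighborFinset x, ∑ z ∈ sphF G hconn y 0, φ z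
      = ∑ z ∈ sphF G hconn x 1, φ z := by
  have h1 : ∀ y, sphF G hconn y 0 = {y} := by
    intro y
    ext z
    rw [mem_sphF hconn, Finset.mem_singleton]
    constructor
    · intro h; exact ((hconn.dist_eq_zero_iff).mp h).symm
    · rintro rfl; exact SimpleGraph.dist_self
  have h2 : sphF G hconn x 1 = G.neighborFinset x := by
    ext z
    rw [mem_sphF hconn, mem_neighborFinset, dist_eq_one_iff_adj]
  simp [h1, h2]

lemma aux_sum_succ {k : ℕ} (hk : 2 ≤ k) (hacyc : G.IsAcyclic) (hconn : G.Connected)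
    (hreg : G.IsRegularOfDegree k) (φ : V → ℂ) (x : V) (n : ℕ) :
    ∑ y ∈ G.neighborFinset x, ∑ z ∈ sphF G hconn y (n+1), φ z
      = (if n = 0 then (k:ℂ) else ((k:ℂ) - 1)) * ∑ z ∈ sphF G hconn x n, φ z
        + ∑ z ∈ sphF G hconn x (n+2), φ z := by
  classical
  set U : Finset V := sphF G hconn x n ∪ sphF G hconn x (n+2) with hU
  have hdisj : Disjoint (sphF G hconn x n) (sphF G hconn x (n+2)) := by
    rw [Finset.disjoint_left]
    intro z hz hz'
    rw [mem_sphF hconn] at hz hz'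
    omega
  have hsub : ∀ y ∈ G.neighborFinset x,
      sphF G hconn y (n+1) = U.filter (fun z => G.dist y z = n + 1) := by
    intro y hy
    rw [mem_neighborFinset] at hy
    ext z
    rw [mem_sphF hconn, Finset.mem_filter, hU, Finset.mem_union, mem_sphF hconn, mem_sphF hconn]
    constructor
    · intro h
      refine ⟨?_, h⟩
      rcases aux_dichotomy hacyc hconn hy (z := z) with hc | hc <;> omega
    · exact fun h => h.2
  calc ∑ y ∈ G.neighborFinset x, ∑ z ∈ sphF G hconn y (n+1), φ z
      = ∑ y ∈ G.neighborFinset x, ∑ z ∈ U, if G.dist y z = n + 1 then φ z else 0 := by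
        refine Finset.sum_congr rfl fun y hy => ?_
        rw [hsub y hy, Finset.sum_filter]
    _ = ∑ z ∈ U, ∑ y ∈ G.neighborFinset x, if G.dist y z = n + 1 then φ z else 0 :=
        Finset.sum_comm
    _ = ∑ z ∈ U, (((G.neighborFinset x).filter (fun y => G.dist y z = n + 1)).card : ℂ) * φ z := by
        refine Finset.sum_congr rfl fun z _ => ?_
        rw [← Finset.sum_filter, Finset.sum_const, nsmul_eq_mul]
    _ = ∑ z ∈ sphF G hconn x n,
          (((G.neighborFinset x).filter (fun y => G.dist y z = n + 1)).card : ℂ) * φ z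
        + ∑ z ∈ sphF G hconn x (n+2),
          (((G.neighborFinset x).filter (fun y => G.dist y z = n + 1)).card : ℂ) * φ z :=
        Finset.sum_union hdisj
    _ = (if n = 0 then (k:ℂ) else ((k:ℂ) - 1)) * ∑ z ∈ sphF G hconn x n, φ z
        + ∑ z ∈ sphF G hconn x (n+2), φ z := by
        congr 1
        · rw [Finset.mul_sum]
          refine Finset.sum_congr rfl fun z hz => ?_
          rw [mem_sphF hconn] at hz
          rcases Nat.eq_zero_or_pos n with hn | hn
          · subst hn
            have hzx : z = x := (hconn.dist_eq_zero_iff).mp hz |>.symm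
            subst hzx
            have hc : ((G.neighborFinset z).filter (fun y => G.dist y z = 0 + 1)).card = k := by
              simpa using aux_card_center hreg z
            rw [hc]
            simp
          · obtain ⟨m, rfl⟩ : ∃ m, n = m + 1 := ⟨n - 1, by omega⟩
            rw [aux_card_up hacyc hconn hreg hz, Nat.cast_sub (by omega : 1 ≤ k)]
            simp
        · refine Finset.sum_congr rfl fun z hz => ?_
          rw [mem_sphF hconn] at hz
          rw [aux_card_down hacyc hconn (by omega : G.dist x z = n + 1 + 1)]
          simp

lemma aux_alg (k A B C : ℂ) (hk : k ≠ 0) (hc : k - 1 ≠ 0) (j : ℕ) :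
    k * ((k*(k-1)^(j+1))⁻¹ * B) - (k*(k-1)^(j+1))⁻¹ * ((k-1)*A + C)
      = (2 * ((k*(k-1)^(j+1))⁻¹ * B) - (k*(k-1)^(j+2))⁻¹ * C - (k*(k-1)^j)⁻¹ * A)
        + (2 - k) * ((k*(k-1)^(j+2))⁻¹ * C - (k*(k-1)^(j+1))⁻¹ * B) := by
  have hp : (k-1)^j ≠ 0 := pow_ne_zero _ hc
  rw [pow_succ, pow_succ, pow_succ]
  generalize hq : (k-1)^j = p at hp ⊢
  have f1 : (k*(p*(k-1)))⁻¹ * ((k-1)*A) = (k*p)⁻¹ * A := by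
    field_simp
  have f2 : (k*(p*(k-1)*(k-1)))⁻¹ * C = (k-1)⁻¹ * ((k*(p*(k-1)))⁻¹ * C) := by
    rw [show k*(p*(k-1)*(k-1)) = (k-1) * (k*(p*(k-1))) by ring, mul_inv, mul_assoc]
  have f3 : (k-1)⁻¹ * (k-1) = 1 := inv_mul_cancel₀ hc
  rw [mul_add, f1, f2]
  linear_combination ((k*(p*(k-1)))⁻¹ * C) * f3

end Aux

/-- Discrete Darboux equation on the `k`-regular tree:
`Δ_𝕋 M_φ(x,r) = (Δ_𝒫 + (2-k)∂_r) M_φ(x,r)` for all `r ≥ 0`, where on the bi-infinite path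
`Δ_𝒫 v(r) = 2v(r) - v(r+1) - v(r-1)` and `∂_r v(r) = v(r+1) - v(r)`. -/
theorem darboux_equation {V : Type*} (G : SimpleGraph V)
    [∀ v, Fintype (G.neighborSet v)]
    (k : ℕ) (hk : 2 ≤ k) (hconn : G.Connected) (hacyc : G.IsAcyclic)
    (hreg : G.IsRegularOfDegree k) (φ : V → ℂ) (x : V) (r : ℤ) (hr : 0 ≤ r) :
    (k : ℂ) * sphericalMeanZ G k φ x r
        - ∑ y ∈ G.neighborFinset x, sphericalMeanZ G k φ y r
      = (2 * sphericalMeanZ G k φ x r - sphericalMeanZ G k φ x (r + 1)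
            - sphericalMeanZ G k φ x (r - 1))
        + (2 - (k : ℂ)) * (sphericalMeanZ G k φ x (r + 1) - sphericalMeanZ G k φ x r) := by
  classical
  have hk0 : (k : ℂ) ≠ 0 := by
    exact_mod_cast Nat.cast_ne_zero.mpr (by omega)
  have hk1 : (k : ℂ) - 1 ≠ 0 := by
    have : ((k - 1 : ℕ) : ℂ) ≠ 0 := Nat.cast_ne_zero.mpr (by omega)
    rwa [Nat.cast_sub (by omega : 1 ≤ k), Nat.cast_one] at this
  obtain ⟨n, rfl⟩ : ∃ n : ℕ, r = (n : ℤ) := ⟨r.toNat, by omega⟩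
  set T : V → ℕ → ℂ := fun v m => ∑ z ∈ sphF G hconn v m, φ z with hT
  have hM : ∀ (v : V) (m : ℕ), sphericalMean G k φ v m
      = ((sphereSize k m : ℂ))⁻¹ * T v m := fun v m => sphericalMean_eq hconn k φ v m
  rcases Nat.eq_zero_or_pos n with h0 | hpos
  · -- n = 0
    subst h0
    have hz : ((0 : ℕ) : ℤ).natAbs = 0 := by omega
    have hplus : (((0 : ℕ) : ℤ) + 1).natAbs = 1 := by omega
    have hminus : (((0 : ℕ) : ℤ) - 1).natAbs = 1 := by omega
    simp only [sphericalMeanZ, hz, hplus, hminus]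
    simp only [hM]
    have hsum0 : ∑ y ∈ G.neighborFinset x, ((sphereSize k 0 : ℂ))⁻¹ * T y 0
        = T x 1 := by
      have h := aux_sum_zero hconn φ x
      calc ∑ y ∈ G.neighborFinset x, ((sphereSize k 0 : ℂ))⁻¹ * T y 0
          = ∑ y ∈ G.neighborFinset x, T y 0 := by
            refine Finset.sum_congr rfl fun y _ => ?_
            simp [sphereSize]
        _ = T x 1 := h
    rw [hsum0]
    have hS0 : ((sphereSize k 0 : ℕ) : ℂ) = 1 := by simp [sphereSize]
    have hS1 : ((sphereSize k 1 : ℕ) : ℂ) = (k : ℂ) := by simp [sphereSize]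
    rw [hS0, hS1]
    field_simp
    ring
  · -- n = m + 1
    obtain ⟨m, rfl⟩ : ∃ m, n = m + 1 := ⟨n - 1, by omega⟩
    have hz : (((m + 1 : ℕ)) : ℤ).natAbs = m + 1 := by omega
    have hplus : ((((m + 1 : ℕ)) : ℤ) + 1).natAbs = m + 2 := by omega
    have hminus : ((((m + 1 : ℕ)) : ℤ) - 1).natAbs = m := by omega
    simp only [sphericalMeanZ, hz, hplus, hminus]
    simp only [hM]
    have hsum : ∑ y ∈ G.neighborFinset x, ((sphereSize k (m+1) : ℂ))⁻¹ * T y (m+1)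
        = ((sphereSize k (m+1) : ℂ))⁻¹
            * ((if m = 0 then (k:ℂ) else ((k:ℂ) - 1)) * T x m + T x (m+2)) := by
      rw [← Finset.mul_sum, aux_sum_succ hk hacyc hconn hreg φ x m]
    rw [hsum]
    rcases Nat.eq_zero_or_pos m with hm0 | hmpos
    · subst hm0
      have hS0 : ((sphereSize k 0 : ℕ) : ℂ) = 1 := by simp [sphereSize]
      have hS1 : ((sphereSize k (0+1) : ℕ) : ℂ) = (k : ℂ) := by simp [sphereSize]
      have hS2 : ((sphereSize k (0+2) : ℕ) : ℂ) = (k : ℂ) * ((k : ℂ) - 1) := by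
        simp [sphereSize, Nat.cast_sub (by omega : 1 ≤ k)]
      rw [hS0, hS1, hS2, if_pos rfl]
      field_simp
      ring
    · obtain ⟨j, rfl⟩ : ∃ j, m = j + 1 := ⟨m - 1, by omega⟩
      have hSgen : ∀ i : ℕ, ((sphereSize k (i+1) : ℕ) : ℂ)
          = (k : ℂ) * ((k : ℂ) - 1) ^ i := by
        intro i
        simp [sphereSize, Nat.cast_sub (by omega : 1 ≤ k)]
      rw [show j + 1 + 2 = (j + 2) + 1 by omega]
      rw [hSgen j, hSgen (j+1), hSgen (j+2), if_neg (by omega)]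
      exact aux_alg (k:ℂ) _ _ _ hk0 hk1 j
end

section
/- Let u : V(𝕋) × ℤ≥0 → ℂ be a function on the k-regular tree and M_u(x,r,n) its spherical mean in x. Then the spherical mean commutes with the Laplacian: M_{Δ_𝕋 u}(x,r,n) = k·M_u(x,r,n) − (k−1)·M_u(x,r+1,n) − M_u(x,r−1,n) = Δ_𝕋(M_u)(x,r,n) for all r ≥ 1. -/
open scoped BigOperators

/-- The combinatorial Laplacian `Δ φ(x) = deg(x)·φ(x) - Σ_{y∼x} φ(y)`. -/
noncomputable def graphLaplacian {V : Type*} (G : SimpleGraph V)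
    [∀ v, Fintype (G.neighborSet v)] (φ : V → ℂ) (x : V) : ℂ :=
  (G.degree x : ℂ) * φ x - ∑ y ∈ G.neighborFinset x, φ y

namespace TreeSphereAux

open SimpleGraph
set_option linter.unusedSectionVars false

variable {V : Type*} [DecidableEq V] {G : SimpleGraph V}

/-- In a connected acyclic graph, every path realizes the distance. -/
lemma isPath_length_eq (hconn : G.Connected) (hacyc : G.IsAcyclic) {a b : V}
    {p : G.Walk a b} (hp : p.IsPath) : p.length = G.dist a b := by
  obtain ⟨w, hw⟩ := hconn.exists_walk_length_eq_dist a b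
  have hq : w.bypass.IsPath := w.bypass_isPath
  have hlen : w.bypass.length = G.dist a b :=
    le_antisymm (hw ▸ w.length_bypass_le) (SimpleGraph.dist_le _)
  have hpq : (⟨p, hp⟩ : G.Path a b) = ⟨w.bypass, hq⟩ :=
    (isAcyclic_iff_path_unique.mp hacyc) _ _
  have : p = w.bypass := congrArg Subtype.val hpq
  rw [this, hlen]

lemma exists_path_length_dist (hconn : G.Connected) (a b : V) :
    ∃ p : G.Walk a b, p.IsPath ∧ p.length = G.dist a b := by
  obtain ⟨w, hw⟩ := hconn.exists_walk_length_eq_dist a b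
  exact ⟨w.bypass, w.bypass_isPath,
    le_antisymm (le_trans w.length_bypass_le hw.le) (SimpleGraph.dist_le _)⟩

lemma dist_le_of_mem_support {a b z : V} (p : G.Walk a b) (hz : z ∈ p.support) :
    G.dist a z ≤ p.length :=
  le_trans (SimpleGraph.dist_le _) (p.length_takeUntil_le hz)

lemma isPath_concat {a b c : V} {p : G.Walk a b} (hp : p.IsPath) (h : G.Adj b c)
    (hc : c ∉ p.support) : (p.concat h).IsPath := by
  rw [← Walk.isPath_reverse_iff, Walk.reverse_concat]
  rw [Walk.cons_isPath_iff]
  exact ⟨hp.reverse, by simpa using hc⟩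

/-- Dichotomy: distances from `x` to two adjacent vertices differ by exactly one. -/
lemma dist_adj_dichotomy (hconn : G.Connected) (hacyc : G.IsAcyclic) (x : V) {a b : V}
    (hab : G.Adj a b) :
    G.dist x b = G.dist x a + 1 ∨ G.dist x a = G.dist x b + 1 := by
  obtain ⟨p, hp, hplen⟩ := exists_path_length_dist hconn x a
  by_cases hb : b ∈ p.support
  · right
    have h1 : (p.takeUntil b hb).length = G.dist x b :=
      isPath_length_eq hconn hacyc (hp.takeUntil hb)
    have h2 : (p.takeUntil b hb).length + (p.dropUntil b hb).length = p.length := by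
      conv_rhs => rw [← p.take_spec hb]
      rw [Walk.length_append]
    have hne : (p.dropUntil b hb).length ≠ 0 := by
      intro h0
      exact hab.ne' (Walk.eq_of_length_eq_zero h0)
    have htri : G.dist x a ≤ G.dist x b + G.dist b a := hconn.dist_triangle
    have hba : G.dist b a = 1 := SimpleGraph.dist_eq_one_iff_adj.mpr hab.symm
    omega
  · left
    have hq : (p.concat hab).IsPath := isPath_concat hp hab hb
    have := isPath_length_eq hconn hacyc hq
    rw [Walk.length_concat, hplen] at this
    omega

/-- Unique "parent": a vertex at distance `r+1` has exactly one neighbor at distance `r`. -/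
lemma unique_parent (hconn : G.Connected) (hacyc : G.IsAcyclic) {x z : V} {r : ℕ}
    (hz : G.dist x z = r + 1) :
    ∃! y, G.Adj z y ∧ G.dist x y = r := by
  obtain ⟨p, hp, hplen⟩ := exists_path_length_dist hconn x z
  have hxz : z ≠ x := by
    intro h; subst h
    rw [hconn.dist_eq_zero_iff.mpr rfl] at hz; omega
  obtain ⟨y, h, q, hq⟩ := Walk.exists_eq_cons_of_ne hxz p.reverse
  have hqpath : q.IsPath := by
    have := hp.reverse
    rw [hq, Walk.cons_isPath_iff] at this
    exact this.1
  have hdisty : G.dist x y = r := by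
    have hlen : p.reverse.length = r + 1 := by rw [Walk.length_reverse, hplen, hz]
    rw [hq, Walk.length_cons] at hlen
    rw [SimpleGraph.dist_comm, ← isPath_length_eq hconn hacyc hqpath]
    omega
  refine ⟨y, ⟨h, hdisty⟩, ?_⟩
  have key : ∀ w, G.Adj z w → G.dist x w = r →
      ∃ (pw : G.Walk x z), pw.IsPath ∧ pw.reverse.getVert 1 = w := by
    intro w hadj hdw
    obtain ⟨pw, hpw, hpwlen⟩ := exists_path_length_dist hconn x w
    have hznot : z ∉ pw.support := by
      intro hmem
      have := dist_le_of_mem_support pw hmem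
      omega
    refine ⟨pw.concat hadj.symm, isPath_concat hpw hadj.symm hznot, ?_⟩
    rw [Walk.reverse_concat, Walk.getVert_cons_succ, Walk.getVert_zero]
  rintro w ⟨hadj, hdw⟩
  obtain ⟨pw, hpw, hw1⟩ := key w hadj hdw
  obtain ⟨py, hpy, hy1⟩ := key y h hdisty
  have hpe : pw = py := congrArg Subtype.val
    ((isAcyclic_iff_path_unique.mp hacyc) ⟨pw, hpw⟩ ⟨py, hpy⟩)
  rw [← hw1, ← hy1, hpe]

lemma sphereSize_succ (k r : ℕ) :
    sphereSize k (r + 1) = sphereSize k r * (if r = 0 then k else k - 1) := by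
  cases r with
  | zero => simp [sphereSize]
  | succ m => simp [sphereSize, pow_succ, mul_assoc]

lemma sphereSize_pos {k : ℕ} (hk : 2 ≤ k) (r : ℕ) : 0 < sphereSize k r := by
  unfold sphereSize
  split
  · omega
  · have h1 : 0 < (k - 1) ^ (r - 1) := Nat.pow_pos (by omega)
    have h2 : 0 < k := by omega
    exact Nat.mul_pos h2 h1

variable [∀ v, Fintype (G.neighborSet v)]

/-- Exactly one neighbor of a vertex at distance `r+1` from `x` is at distance `r`. -/
lemma card_down (hconn : G.Connected) (hacyc : G.IsAcyclic) {x z : V} {r : ℕ}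
    (hz : G.dist x z = r + 1) [DecidablePred fun y => G.dist x y = r] :
    ((G.neighborFinset z).filter (fun y => G.dist x y = r)).card = 1 := by
  obtain ⟨y₀, hy₀, huniq⟩ := unique_parent hconn hacyc hz
  rw [Finset.card_eq_one]
  refine ⟨y₀, ?_⟩
  ext y
  simp only [Finset.mem_filter, mem_neighborFinset, Finset.mem_singleton]
  constructor
  · rintro ⟨h1, h2⟩; exact huniq y ⟨h1, h2⟩
  · rintro rfl; exact hy₀

/-- Number of neighbors one step further from `x`. -/
lemma card_up (hconn : G.Connected) (hacyc : G.IsAcyclic) {k : ℕ}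
    (hreg : G.IsRegularOfDegree k) {x z : V} {r : ℕ}
    (hz : G.dist x z = r) [DecidablePred fun y => G.dist x y = r + 1] :
    ((G.neighborFinset z).filter (fun y => G.dist x y = r + 1)).card
      = if r = 0 then k else k - 1 := by
  classical
  cases r with
  | zero =>
    have hzx : x = z := hconn.dist_eq_zero_iff.mp hz
    subst hzx
    rw [if_pos rfl]
    have hfil : (G.neighborFinset x).filter (fun y => G.dist x y = 1)
        = G.neighborFinset x := by
      apply Finset.filter_true_of_mem
      intro y hy
      exact SimpleGraph.dist_eq_one_iff_adj.mpr ((mem_neighborFinset _ _ _).mp hy)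
    rw [hfil, card_neighborFinset_eq_degree, hreg x]
  | succ m =>
    rw [if_neg (Nat.succ_ne_zero m)]
    have hdown : ((G.neighborFinset z).filter (fun y => G.dist x y = m)).card = 1 :=
      card_down hconn hacyc (by rw [hz])
    have hsplit := Finset.card_filter_add_card_filter_not
      (s := G.neighborFinset z) (p := fun y => G.dist x y = m + 1 + 1)
    have hcongr : (G.neighborFinset z).filter (fun y => ¬ G.dist x y = m + 1 + 1)
        = (G.neighborFinset z).filter (fun y => G.dist x y = m) := by
      apply Finset.filter_congr
      intro y hy
      have hadj : G.Adj z y := (mem_neighborFinset _ _ _).mp hy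
      have hdi := dist_adj_dichotomy hconn hacyc x hadj
      rw [hz] at hdi
      constructor
      · intro hne
        rcases hdi with h | h
        · exact absurd h hne
        · omega
      · intro h; omega
    rw [hcongr, hdown] at hsplit
    have hdeg : (G.neighborFinset z).card = k := by
      rw [card_neighborFinset_eq_degree, hreg z]
    omega

/-- Existence of the sphere finset with the right cardinality. -/
lemma sphere_exists (hconn : G.Connected) (hacyc : G.IsAcyclic) {k : ℕ} (hk : 2 ≤ k)
    (hreg : G.IsRegularOfDegree k) (x : V) (r : ℕ) :
    ∃ F : Finset V, (∀ z, z ∈ F ↔ G.dist x z = r) ∧ F.card = sphereSize k r := by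
  classical
  induction r with
  | zero =>
    refine ⟨{x}, fun z => ?_, by simp [sphereSize]⟩
    simp only [Finset.mem_singleton]
    rw [eq_comm]
    exact hconn.dist_eq_zero_iff.symm
  | succ r ih =>
    obtain ⟨F, hF, hcard⟩ := ih
    refine ⟨F.biUnion (fun w => (G.neighborFinset w).filter (fun y => G.dist x y = r + 1)),
      ?_, ?_⟩
    · intro z
      simp only [Finset.mem_biUnion, Finset.mem_filter, mem_neighborFinset]
      constructor
      · rintro ⟨w, _, _, hdz⟩; exact hdz
      · intro hdz
        obtain ⟨y, ⟨hadj, hdy⟩, -⟩ := unique_parent hconn hacyc hdz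
        exact ⟨y, (hF y).mpr hdy, hadj.symm, hdz⟩
    · rw [Finset.card_biUnion]
      · have hsum : ∀ w ∈ F,
            ((G.neighborFinset w).filter (fun y => G.dist x y = r + 1)).card
              = if r = 0 then k else k - 1 := by
          intro w hw
          exact card_up hconn hacyc hreg ((hF w).mp hw)
        rw [Finset.sum_congr rfl hsum, Finset.sum_const, hcard, sphereSize_succ,
          smul_eq_mul, mul_comm]
      · intro w1 h1 w2 h2 hne
        rw [Function.onFun, Finset.disjoint_left]
        intro z hz1 hz2
        simp only [Finset.mem_filter, mem_neighborFinset] at hz1 hz2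
        obtain ⟨y, -, huniq⟩ := unique_parent hconn hacyc hz1.2
        exact hne ((huniq w1 ⟨hz1.1.symm, (hF w1).mp h1⟩).trans
          (huniq w2 ⟨hz2.1.symm, (hF w2).mp h2⟩).symm)

/-- Spherical mean as a finite sum. -/
lemma mean_eq {k : ℕ} (φ : V → ℂ) {c : V} {ρ : ℕ} {F : Finset V}
    (hF : ∀ z, z ∈ F ↔ G.dist c z = ρ) :
    sphericalMean G k φ c ρ = ((sphereSize k ρ : ℂ))⁻¹ * ∑ z ∈ F, φ z := by
  unfold sphericalMean
  congr 1
  have hset : {z : V | G.dist c z = ρ} = (F : Set V) := by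
    ext z; simp [hF]
  rw [hset]
  exact Finset.tsum_subtype' F φ

/-- Double-counting swap. -/
lemma sum_swap_card {α : Type*} [DecidableEq α] (s t : Finset α) (p : α → α → Prop)
    [∀ z y, Decidable (p z y)] (f : α → ℂ) :
    (∑ z ∈ s, ∑ y ∈ t.filter (fun y => p z y), f y)
      = ∑ y ∈ t, ((s.filter (fun z => p z y)).card : ℂ) * f y := by
  simp_rw [Finset.sum_filter]
  rw [Finset.sum_comm]
  refine Finset.sum_congr rfl fun y _ => ?_
  rw [← Finset.sum_filter, Finset.sum_const, nsmul_eq_mul]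

end TreeSphereAux

open TreeSphereAux SimpleGraph in
/-- On the `k`-regular tree, for `r ≥ 1` the spherical mean commutes with
the combinatorial Laplacian:
`M_{Δu}(x,r,n) = k M_u(x,r,n) - (k-1) M_u(x,r+1,n) - M_u(x,r-1,n) = Δ(M_u)(x,r,n)`. -/
theorem sphericalMean_comm_laplacian {V : Type*} (G : SimpleGraph V)
    [∀ v, Fintype (G.neighborSet v)]
    (k : ℕ) (hk : 2 ≤ k) (hconn : G.Connected) (hacyc : G.IsAcyclic)
    (hreg : G.IsRegularOfDegree k) (u : V → ℕ → ℂ) (x : V) (r n : ℕ) (hr : 1 ≤ r) :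
    sphericalMean G k (graphLaplacian G (fun z => u z n)) x r
        = (k : ℂ) * sphericalMean G k (fun z => u z n) x r
          - ((k : ℂ) - 1) * sphericalMean G k (fun z => u z n) x (r + 1)
          - sphericalMean G k (fun z => u z n) x (r - 1) ∧
    sphericalMean G k (graphLaplacian G (fun z => u z n)) x r
        = (k : ℂ) * sphericalMean G k (fun z => u z n) x r
          - ∑ y ∈ G.neighborFinset x, sphericalMean G k (fun z => u z n) y r := by
  classical
  obtain ⟨m, rfl⟩ : ∃ m, r = m + 1 := ⟨r - 1, by omega⟩
  set φ : V → ℂ := fun z => u z n with hφdef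
  obtain ⟨Fm, hFm, hcm⟩ := sphere_exists hconn hacyc hk hreg x m
  obtain ⟨Fr, hFr, hcr⟩ := sphere_exists hconn hacyc hk hreg x (m + 1)
  obtain ⟨Fs, hFs, hcs⟩ := sphere_exists hconn hacyc hk hreg x (m + 2)
  set cc : ℕ := if m = 0 then k else k - 1 with hccdef
  have hSpos : ∀ ρ : ℕ, ((sphereSize k ρ : ℕ) : ℂ) ≠ 0 := fun ρ =>
    Nat.cast_ne_zero.mpr (sphereSize_pos hk ρ).ne'
  have hccpos : cc ≠ 0 := by rw [hccdef]; split <;> omega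
  have hccC : ((cc : ℕ) : ℂ) ≠ 0 := Nat.cast_ne_zero.mpr hccpos
  have hsub : ((k - 1 : ℕ) : ℂ) = (k : ℂ) - 1 := by
    push_cast [Nat.cast_sub (by omega : 1 ≤ k)]; ring
  have hk1 : ((k : ℂ) - 1) ≠ 0 := by
    rw [← hsub]; exact Nat.cast_ne_zero.mpr (by omega)
  have hcast1 : ((sphereSize k (m + 2) : ℕ) : ℂ)
      = ((k : ℂ) - 1) * ((sphereSize k (m + 1) : ℕ) : ℂ) := by
    rw [show m + 2 = (m + 1) + 1 from rfl, sphereSize_succ k (m + 1),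
      if_neg (Nat.succ_ne_zero m)]
    push_cast [Nat.cast_sub (by omega : 1 ≤ k)]
    ring
  have hcast2 : ((sphereSize k (m + 1) : ℕ) : ℂ)
      = ((cc : ℕ) : ℂ) * ((sphereSize k m : ℕ) : ℂ) := by
    rw [sphereSize_succ k m, ← hccdef]
    push_cast
    ring
  -- splitting neighbourhoods of sphere points
  have hsplit : ∀ z ∈ Fr, (∑ y ∈ G.neighborFinset z, φ y)
      = (∑ y ∈ Fs.filter (fun y => G.Adj z y), φ y)
        + ∑ y ∈ Fm.filter (fun y => G.Adj z y), φ y := by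
    intro z hz
    have hdz : G.dist x z = m + 1 := (hFr z).mp hz
    have hdisj : Disjoint (Fs.filter (fun y => G.Adj z y)) (Fm.filter (fun y => G.Adj z y)) := by
      rw [Finset.disjoint_left]
      intro y hy1 hy2
      simp only [Finset.mem_filter, hFs, hFm] at hy1 hy2
      omega
    have hN : G.neighborFinset z
        = (Fs.filter (fun y => G.Adj z y)) ∪ (Fm.filter (fun y => G.Adj z y)) := by
      ext y
      simp only [Finset.mem_union, Finset.mem_filter, mem_neighborFinset, hFs, hFm]
      constructor
      · intro hadj
        rcases dist_adj_dichotomy hconn hacyc x hadj with h | h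
        · left; exact ⟨by omega, hadj⟩
        · right; exact ⟨by omega, hadj⟩
      · rintro (⟨_, h⟩ | ⟨_, h⟩) <;> exact h
    rw [hN, Finset.sum_union hdisj]
  have hup : (∑ z ∈ Fr, ∑ y ∈ Fs.filter (fun y => G.Adj z y), φ y) = ∑ y ∈ Fs, φ y := by
    rw [sum_swap_card]
    refine Finset.sum_congr rfl fun y hy => ?_
    have hdy : G.dist x y = m + 1 + 1 := (hFs y).mp hy
    have he : Fr.filter (fun z => G.Adj z y)
        = (G.neighborFinset y).filter (fun z => G.dist x z = m + 1) := by
      ext z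
      simp only [Finset.mem_filter, mem_neighborFinset, hFr]
      exact ⟨fun ⟨h1, h2⟩ => ⟨h2.symm, h1⟩, fun ⟨h1, h2⟩ => ⟨h2, h1.symm⟩⟩
    rw [he, card_down hconn hacyc hdy, Nat.cast_one, one_mul]
  have hdown : (∑ z ∈ Fr, ∑ y ∈ Fm.filter (fun y => G.Adj z y), φ y)
      = ((cc : ℕ) : ℂ) * ∑ y ∈ Fm, φ y := by
    rw [sum_swap_card, Finset.mul_sum]
    refine Finset.sum_congr rfl fun y hy => ?_
    have hdy : G.dist x y = m := (hFm y).mp hy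
    have he : Fr.filter (fun z => G.Adj z y)
        = (G.neighborFinset y).filter (fun z => G.dist x z = m + 1) := by
      ext z
      simp only [Finset.mem_filter, mem_neighborFinset, hFr]
      exact ⟨fun ⟨h1, h2⟩ => ⟨h2.symm, h1⟩, fun ⟨h1, h2⟩ => ⟨h2, h1.symm⟩⟩
    rw [he, card_up hconn hacyc hreg hdy, ← hccdef]
  have hLapSum : (∑ z ∈ Fr, graphLaplacian G φ z)
      = (k : ℂ) * (∑ z ∈ Fr, φ z)
        - ((∑ y ∈ Fs, φ y) + ((cc : ℕ) : ℂ) * ∑ y ∈ Fm, φ y) := by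
    unfold graphLaplacian
    rw [Finset.sum_sub_distrib]
    congr 1
    · rw [Finset.mul_sum]
      exact Finset.sum_congr rfl fun z _ => by rw [hreg z]
    · rw [Finset.sum_congr rfl hsplit, Finset.sum_add_distrib, hup, hdown]
  have hM : sphericalMean G k (graphLaplacian G φ) x (m + 1)
      = ((sphereSize k (m + 1) : ℕ) : ℂ)⁻¹
        * ((k : ℂ) * (∑ z ∈ Fr, φ z)
          - ((∑ y ∈ Fs, φ y) + ((cc : ℕ) : ℂ) * ∑ y ∈ Fm, φ y)) := by
    rw [mean_eq (graphLaplacian G φ) hFr, hLapSum]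
  -- neighbour spheres
  have hDisjMS : Disjoint Fm Fs := by
    rw [Finset.disjoint_left]
    intro z h1 h2
    have e1 := (hFm z).mp h1
    have e2 := (hFs z).mp h2
    omega
  have hnbhd : ∀ y ∈ G.neighborFinset x, sphericalMean G k φ y (m + 1)
      = ((sphereSize k (m + 1) : ℕ) : ℂ)⁻¹
        * ∑ z ∈ (Fm ∪ Fs).filter (fun z => G.dist y z = m + 1), φ z := by
    intro y hy
    have hadj : G.Adj x y := (mem_neighborFinset _ _ _).mp hy
    apply mean_eq
    intro z
    simp only [Finset.mem_filter, Finset.mem_union, hFm, hFs]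
    constructor
    · rintro ⟨_, h⟩; exact h
    · intro h
      refine ⟨?_, h⟩
      have h' : G.dist z y = m + 1 := by rw [SimpleGraph.dist_comm]; exact h
      rcases dist_adj_dichotomy hconn hacyc z hadj with hc | hc
      · left; rw [SimpleGraph.dist_comm]; omega
      · right; rw [SimpleGraph.dist_comm]; omega
  have hnsum : (∑ y ∈ G.neighborFinset x, sphericalMean G k φ y (m + 1))
      = ((sphereSize k (m + 1) : ℕ) : ℂ)⁻¹
        * ((∑ z ∈ Fs, φ z) + ((cc : ℕ) : ℂ) * ∑ z ∈ Fm, φ z) := by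
    rw [Finset.sum_congr rfl hnbhd, ← Finset.mul_sum]
    congr 1
    rw [sum_swap_card (G.neighborFinset x) (Fm ∪ Fs) (fun y z => G.dist y z = m + 1) φ,
      Finset.sum_union hDisjMS]
    have hFspart : (∑ z ∈ Fs,
        (((G.neighborFinset x).filter (fun y => G.dist y z = m + 1)).card : ℂ) * φ z)
        = ∑ z ∈ Fs, φ z := by
      refine Finset.sum_congr rfl fun z hz => ?_
      have hzx : G.dist z x = m + 1 + 1 := by
        rw [SimpleGraph.dist_comm]; exact (hFs z).mp hz
      have he : (G.neighborFinset x).filter (fun y => G.dist y z = m + 1)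
          = (G.neighborFinset x).filter (fun y => G.dist z y = m + 1) := by
        apply Finset.filter_congr
        intro y _
        rw [SimpleGraph.dist_comm]
      rw [he, card_down hconn hacyc hzx, Nat.cast_one, one_mul]
    have hFmpart : (∑ z ∈ Fm,
        (((G.neighborFinset x).filter (fun y => G.dist y z = m + 1)).card : ℂ) * φ z)
        = ((cc : ℕ) : ℂ) * ∑ z ∈ Fm, φ z := by
      rw [Finset.mul_sum]
      refine Finset.sum_congr rfl fun z hz => ?_
      have hzx : G.dist z x = m := by
        rw [SimpleGraph.dist_comm]; exact (hFm z).mp hz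
      have he : (G.neighborFinset x).filter (fun y => G.dist y z = m + 1)
          = (G.neighborFinset x).filter (fun y => G.dist z y = m + 1) := by
        apply Finset.filter_congr
        intro y _
        rw [SimpleGraph.dist_comm]
      rw [he, card_up hconn hacyc hreg hzx, ← hccdef]
    rw [hFspart, hFmpart]
    ring
  have t2 : ((k : ℂ) - 1) * sphericalMean G k φ x (m + 1 + 1)
      = ((sphereSize k (m + 1) : ℕ) : ℂ)⁻¹ * ∑ z ∈ Fs, φ z := by
    rw [mean_eq φ hFs, hcast1, mul_inv]
    have hre : ((k : ℂ) - 1) * ((((k : ℂ) - 1)⁻¹ * ((sphereSize k (m + 1) : ℕ) : ℂ)⁻¹)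
          * ∑ z ∈ Fs, φ z)
        = (((k : ℂ) - 1) * ((k : ℂ) - 1)⁻¹)
          * (((sphereSize k (m + 1) : ℕ) : ℂ)⁻¹ * ∑ z ∈ Fs, φ z) := by ring
    rw [hre, mul_inv_cancel₀ hk1, one_mul]
  have t3 : sphericalMean G k φ x m
      = ((sphereSize k (m + 1) : ℕ) : ℂ)⁻¹ * (((cc : ℕ) : ℂ) * ∑ z ∈ Fm, φ z) := by
    rw [mean_eq φ hFm, hcast2, mul_inv]
    have hre : ((cc : ℂ))⁻¹ * ((sphereSize k m : ℕ) : ℂ)⁻¹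
          * (((cc : ℕ) : ℂ) * ∑ z ∈ Fm, φ z)
        = (((cc : ℂ))⁻¹ * ((cc : ℕ) : ℂ))
          * (((sphereSize k m : ℕ) : ℂ)⁻¹ * ∑ z ∈ Fm, φ z) := by ring
    rw [hre, inv_mul_cancel₀ hccC, one_mul]
  constructor
  · rw [hM]
    simp only [Nat.add_sub_cancel]
    rw [mean_eq φ hFr, t2, t3]
    ring
  · rw [hM, mean_eq φ hFr, hnsum]
    ring
end
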